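/- Let $p \geq 3$ and consider the $p\times p$ hub precision matrix $K^\ast$ with $K^\ast_{11} = a > 0$, $K^\ast_{ii} = b > 0$ for $i \geq 2$, $K^\ast_{1i} = K^\ast_{i1} = c \neq 0$ for $i \geq 2$, and all other entries zero. Then: (i) $K^\ast$ is positive definite if and only if $(p-1)c^2 < ab$; and (ii) writing $t = c^2/(ab) \in (0, 1/(p-1))$, the quantity $\mathrm{IRR}_{\mathrm{PCG}}(K^\ast) = \frac{|c|}{\sqrt{ab}}(2 - (p-1)\frac{c^2}{ab}) = \sqrt{t}(2 - (p-1)t)$ satisfies $\mathrm{IRR}_{\mathrm{PCG}}(K^\ast) \leq \frac{4\sqrt{2}}{3\sqrt{3}}\frac{1}{\sqrt{p-1}} < 1$. -/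

import Mathlib

open Matrix Finset

/-- The hub precision matrix: hub value `a` at `(0,0)`, `b` on the rest of the
diagonal, `c` on the first row/column off the diagonal, and `0` elsewhere. -/
def hubMatrix (p : ℕ) [NeZero p] (a b c : ℝ) : Matrix (Fin p) (Fin p) ℝ :=
  Matrix.of (fun i j =>
    if i = j then (if i = 0 then a else b)
    else if i = 0 ∨ j = 0 then c else 0)

lemma hub_quadform {p : ℕ} [NeZero p] (a b c : ℝ) (x : Fin p → ℝ) :
    x ⬝ᵥ (hubMatrix p a b c *ᵥ x)
      = a * x 0 ^ 2 + 2 * c * x 0 * (∑ i ∈ univ.erase 0, x i)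
        + b * ∑ i ∈ univ.erase 0, (x i) ^ 2 := by
  simp only [dotProduct, mulVec, hubMatrix, of_apply]
  rw [← Finset.add_sum_erase _ _ (mem_univ (0 : Fin p))]
  have h0 : (∑ j, (if (0 : Fin p) = j then (if (0:Fin p) = 0 then a else b)
      else if (0:Fin p) = 0 ∨ j = 0 then c else 0) * x j)
      = a * x 0 + c * ∑ j ∈ univ.erase 0, x j := by
    rw [← Finset.add_sum_erase _ _ (mem_univ (0 : Fin p))]
    simp only [if_pos rfl, true_or, if_true]
    congr 1
    rw [Finset.mul_sum]
    apply Finset.sum_congr rfl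
    intro j hj
    have : (0:Fin p) ≠ j := fun h => (mem_erase.mp hj).1 h.symm
    simp [this]
  have h1 : ∀ i ∈ univ.erase (0 : Fin p),
      x i * (∑ j, (if i = j then (if i = 0 then a else b)
        else if i = 0 ∨ j = 0 then c else 0) * x j)
      = b * x i ^ 2 + c * x 0 * x i := by
    intro i hi
    have hi0 : i ≠ 0 := (mem_erase.mp hi).1
    have : (∑ j, (if i = j then (if i = 0 then a else b)
        else if i = 0 ∨ j = 0 then c else 0) * x j) = b * x i + c * x 0 := by
      rw [← Finset.add_sum_erase _ _ (mem_univ i)]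
      simp only [if_pos rfl, if_neg hi0]
      congr 1
      rw [show (∑ j ∈ univ.erase i, (if i = j then b
          else if i = 0 ∨ j = 0 then c else 0) * x j)
        = ∑ j ∈ univ.erase i, (if j = 0 then c * x j else 0) from ?_]
      · rw [Finset.sum_ite_eq' (univ.erase i) (0 : Fin p) (fun j => c * x j)]
        simp [mem_erase, Ne.symm hi0]
      · apply Finset.sum_congr rfl
        intro j hj
        have hji : i ≠ j := fun h => (mem_erase.mp hj).1 h.symm
        by_cases hj0 : j = 0
        · simp [hji, hj0, hi0]
        · simp [hji, hj0, hi0]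
    rw [this]; ring
  rw [h0, Finset.sum_congr rfl h1, Finset.sum_add_distrib, ← Finset.mul_sum, ← Finset.mul_sum]
  ring

theorem stmt_19 {p : ℕ} [NeZero p] (hp : 3 ≤ p) (a b c : ℝ)
    (ha : 0 < a) (hb : 0 < b) (hc : c ≠ 0) :
    ((hubMatrix p a b c).PosDef ↔ ((p : ℝ) - 1) * c ^ 2 < a * b) ∧
    (((p : ℝ) - 1) * c ^ 2 < a * b →
      |c| / Real.sqrt (a * b) * (2 - ((p : ℝ) - 1) * (c ^ 2 / (a * b)))
          ≤ (4 * Real.sqrt 2) / (3 * Real.sqrt 3) * (1 / Real.sqrt ((p : ℝ) - 1)) ∧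
        (4 * Real.sqrt 2) / (3 * Real.sqrt 3) * (1 / Real.sqrt ((p : ℝ) - 1)) < 1) := by
  have hp1 : (2 : ℝ) ≤ (p : ℝ) - 1 := by
    have : (3 : ℝ) ≤ (p : ℝ) := by exact_mod_cast hp
    linarith
  have hp1pos : (0 : ℝ) < (p : ℝ) - 1 := by linarith
  have hcard : ((univ.erase (0 : Fin p)).card : ℝ) = (p : ℝ) - 1 := by
    rw [Finset.card_erase_of_mem (mem_univ _), Finset.card_univ, Fintype.card_fin]
    have h1p : 1 ≤ p := by omega
    push_cast [Nat.cast_sub h1p]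
    ring
  have herm : (hubMatrix p a b c).IsHermitian := by
    ext i j
    simp only [hubMatrix, conjTranspose_apply, of_apply, star_trivial]
    by_cases hij : i = j
    · subst hij; simp
    · simp [hij, Ne.symm hij, or_comm]
  constructor
  · constructor
    · -- PosDef → inequality
      intro hpd
      set v : Fin p → ℝ := fun i => if i = 0 then -(((p:ℝ)-1)*c) else a with hv
      have hi0 : (⟨1, by omega⟩ : Fin p) ≠ 0 := by
        intro h; simpa using congrArg Fin.val h
      have hvne : v ≠ 0 := by
        intro h
        have := congrFun h ⟨1, by omega⟩
        simp [hv, hi0] at this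
        exact absurd this (ne_of_gt ha)
      have key := hpd.dotProduct_mulVec_pos hvne
      rw [star_trivial, hub_quadform] at key
      have hsum : ∑ i ∈ univ.erase (0 : Fin p), v i = ((p:ℝ)-1) * a := by
        rw [Finset.sum_congr rfl (fun i hi => by
          simp [hv, (mem_erase.mp hi).1] : ∀ i ∈ univ.erase (0:Fin p), v i = a)]
        rw [Finset.sum_const, nsmul_eq_mul, hcard]
      have hsq : ∑ i ∈ univ.erase (0 : Fin p), (v i) ^ 2 = ((p:ℝ)-1) * a ^ 2 := by
        rw [Finset.sum_congr rfl (fun i hi => by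
          simp [hv, (mem_erase.mp hi).1] : ∀ i ∈ univ.erase (0:Fin p), (v i)^2 = a^2)]
        rw [Finset.sum_const, nsmul_eq_mul, hcard]
      have hv0 : v 0 = -(((p:ℝ)-1)*c) := by simp [hv]
      rw [hsum, hsq, hv0] at key
      nlinarith [mul_pos ha hp1pos, key]
    · -- inequality → PosDef
      intro hab
      refine PosDef.of_dotProduct_mulVec_pos herm (fun x hx => ?_)
      rw [star_trivial, hub_quadform]
      set s := ∑ i ∈ univ.erase (0 : Fin p), x i with hs
      set q := ∑ i ∈ univ.erase (0 : Fin p), (x i) ^ 2 with hq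
      have hqnn : 0 ≤ q := Finset.sum_nonneg fun i _ => sq_nonneg _
      have hcs : s ^ 2 ≤ q * ((p:ℝ) - 1) := by
        have h := Finset.sum_mul_sq_le_sq_mul_sq (univ.erase (0 : Fin p)) x (fun _ => 1)
        simp only [mul_one, one_pow, Finset.sum_const, nsmul_eq_mul] at h
        rw [hcard] at h
        rw [hs, hq]
        exact h
      by_cases hx0 : x 0 = 0
      · -- then some other coordinate nonzero, q > 0
        obtain ⟨i, hxi⟩ := Function.ne_iff.mp hx
        have hi0 : i ≠ 0 := by rintro rfl; exact hxi hx0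
        have hqpos : 0 < q := by
          have hle : x i ^ 2 ≤ q :=
            Finset.single_le_sum (fun j _ => sq_nonneg (x j))
              (mem_erase.mpr ⟨hi0, mem_univ i⟩)
          have : 0 < x i ^ 2 := (sq_nonneg _).lt_of_ne (Ne.symm (pow_ne_zero 2 hxi))
          linarith
        rw [hx0]
        nlinarith [mul_pos hb hqpos]
      · have hx0sq : 0 < x 0 ^ 2 := (sq_nonneg _).lt_of_ne (Ne.symm (pow_ne_zero 2 hx0))
        by_cases hss : s = 0
        · rw [hss]
          nlinarith [mul_pos ha hx0sq, mul_nonneg hb.le hqnn]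
        · have hssq : 0 < s ^ 2 := (sq_nonneg _).lt_of_ne (Ne.symm (pow_ne_zero 2 hss))
          nlinarith [mul_pos (sub_pos.mpr hab) hssq,
            mul_nonneg (mul_pos ha hb).le (by linarith : (0:ℝ) ≤ q * ((p:ℝ)-1) - s^2),
            mul_nonneg (by linarith : (0:ℝ) ≤ (p:ℝ)-1) (sq_nonneg (a * x 0 + c * s)),
            mul_pos ha hp1pos]
  · intro hab
    have hab0 : 0 < a * b := mul_pos ha hb
    have ht0 : 0 < c ^ 2 / (a * b) := by positivity
    have ht1 : ((p:ℝ) - 1) * (c ^ 2 / (a * b)) < 1 := by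
      rw [mul_div_assoc', div_lt_one hab0]; exact hab
    set t := c ^ 2 / (a * b) with htdef
    have habs : |c| / Real.sqrt (a * b) = Real.sqrt t := by
      rw [htdef, Real.sqrt_div (sq_nonneg c), Real.sqrt_sq_eq_abs]
    rw [habs]
    set R := (4 * Real.sqrt 2) / (3 * Real.sqrt 3) * (1 / Real.sqrt ((p : ℝ) - 1)) with hRdef
    have hK : 0 < Real.sqrt ((p:ℝ)-1) := Real.sqrt_pos.mpr hp1pos
    have e2 : Real.sqrt 2 ^ 2 = 2 := Real.sq_sqrt (by norm_num)
    have e3 : Real.sqrt 3 ^ 2 = 3 := Real.sq_sqrt (by norm_num)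
    have ep : Real.sqrt ((p:ℝ)-1) ^ 2 = (p:ℝ)-1 := Real.sq_sqrt hp1pos.le
    have hR0 : 0 < R := by
      rw [hRdef]
      apply mul_pos
      · positivity
      · exact one_div_pos.mpr hK
    have hR2 : (R) ^ 2
        = 32 / (27 * ((p:ℝ) - 1)) := by
      have hne : ((p:ℝ)-1) ≠ 0 := ne_of_gt hp1pos
      rw [hRdef, mul_pow, div_pow, div_pow, one_pow, mul_pow, mul_pow, e2, e3, ep]
      field_simp
      ring
    have hL0 : 0 ≤ Real.sqrt t * (2 - ((p:ℝ) - 1) * t) :=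
      mul_nonneg (Real.sqrt_nonneg _) (by linarith)
    have hL2 : (Real.sqrt t * (2 - ((p:ℝ) - 1) * t)) ^ 2
        = t * (2 - ((p:ℝ) - 1) * t) ^ 2 := by
      rw [mul_pow, Real.sq_sqrt ht0.le]
    have hsqle : (Real.sqrt t * (2 - ((p:ℝ) - 1) * t)) ^ 2
        ≤ (R) ^ 2 := by
      rw [hL2, hR2, le_div_iff₀ (by positivity)]
      nlinarith [mul_nonneg (sq_nonneg (3 * (((p:ℝ)-1) * t) - 2))
        (by linarith : (0:ℝ) ≤ 8 - 3 * (((p:ℝ)-1) * t)), ht0.le, hp1pos]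
    clear_value R
    clear_value t
    constructor
    · calc Real.sqrt t * (2 - ((p:ℝ) - 1) * t)
          = Real.sqrt ((Real.sqrt t * (2 - ((p:ℝ) - 1) * t)) ^ 2) :=
            (Real.sqrt_sq hL0).symm
        _ ≤ Real.sqrt (R ^ 2) := Real.sqrt_le_sqrt hsqle
        _ = R :=
            Real.sqrt_sq hR0.le
    · have hR2lt : (R) ^ 2 < 1 := by
        rw [hR2, div_lt_one (by positivity)]
        linarith
      exact lt_of_pow_lt_pow_left₀ 2 zero_le_one (by simpa using hR2lt)
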